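/- Let g : (ℝ₊)⁴ → ℝ₊ satisfy: for all Q, P, V, w > 0 and all S, U, τ, A > 0, g(S·Q, S⁻¹·U·A⁻¹·P, S·τ⁻¹·V, τ⁻¹·A²·w) = A · g(Q, P, V, w). Then there exists a constant c > 0 such that for all Q, P, V, w > 0, g(Q, P, V, w) = c · √w · √(Q/V). In particular, g is proportional to the square root of Q (the square-root law of market impact) and does not depend on P. -/

import Mathlib

/-- The square-root law of market impact: if the market impact `g Q P V w`
(with `w = σ²`) is positive and invariant under rescaling the units of shares (`S`),
money (`U`) and time (`τ`) and under leverage neutrality (`A`), then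
`g Q P V w = c * √w * √(Q / V)` for a constant `c > 0`.  In particular `g` is
proportional to the square root of `Q` and does not depend on `P`. -/
theorem square_root_law (g : ℝ → ℝ → ℝ → ℝ → ℝ)
    (hg_pos : ∀ Q P V w : ℝ, 0 < Q → 0 < P → 0 < V → 0 < w → 0 < g Q P V w)
    (hg_inv : ∀ Q P V w S U τ A : ℝ, 0 < Q → 0 < P → 0 < V → 0 < w →
      0 < S → 0 < U → 0 < τ → 0 < A →
      g (S * Q) (S⁻¹ * U * A⁻¹ * P) (S * τ⁻¹ * V) (τ⁻¹ * A ^ 2 * w)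
        = A * g Q P V w) :
    ∃ c : ℝ, 0 < c ∧ ∀ Q P V w : ℝ, 0 < Q → 0 < P → 0 < V → 0 < w →
      g Q P V w = c * Real.sqrt w * Real.sqrt (Q / V) := by
  refine ⟨g 1 1 1 1, hg_pos 1 1 1 1 one_pos one_pos one_pos one_pos, ?_⟩
  intro Q P V w hQ hP hV hw
  set A := Real.sqrt (w * (Q / V)) with hA
  have hApos : 0 < A := Real.sqrt_pos.mpr (by positivity)
  have hA2 : A ^ 2 = w * (Q / V) := Real.sq_sqrt (by positivity)
  have h := hg_inv 1 1 1 1 Q (Q * A * P) (Q / V) A one_pos one_pos one_pos one_pos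
    hQ (by positivity) (by positivity) hApos
  have e1 : Q * 1 = Q := mul_one Q
  have e2 : Q⁻¹ * (Q * A * P) * A⁻¹ * 1 = P := by
    field_simp
  have e3 : Q * (Q / V)⁻¹ * 1 = V := by
    field_simp
  have e4 : (Q / V)⁻¹ * A ^ 2 * 1 = w := by
    rw [hA2]
    field_simp
  rw [e1, e2, e3, e4] at h
  rw [h, hA, Real.sqrt_mul hw.le]
  ring
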